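/- arXiv:2001.08368 — 20 statements merged into one kernel-verified Lean document; each statement's English description precedes it below -/
import Mathlib

section
/- Let R be a (not necessarily unital) associative ring and let a, b, c ∈ R. If x and y are both annihilator (b,c)-inverses of a, then x = y; that is, a has at most one annihilator (b,c)-inverse. -/
/-- `x` is an annihilator `(b,c)`-inverse of `a`. -/
def IsAnnBCInv {R : Type*} [NonUnitalRing R] (a b c x : R) : Prop :=
  x * a * x = x ∧ x * a * b = b ∧ c * a * x = c ∧
    (∀ r : R, r * b = 0 → r * x = 0) ∧ (∀ r : R, c * r = 0 → x * r = 0)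

theorem ann_bc_inverse_unique {R : Type*} [NonUnitalRing R] (a b c x y : R)
    (hx : IsAnnBCInv a b c x) (hy : IsAnnBCInv a b c y) : x = y := by
  obtain ⟨hx1, hx2, hx3, hx4, hx5⟩ := hx
  obtain ⟨hy1, hy2, hy3, hy4, hy5⟩ := hy
  have h1 : (x * a - y * a) * b = 0 := by
    rw [sub_mul, mul_assoc, mul_assoc, ← mul_assoc x, ← mul_assoc y, hx2, hy2, sub_self]
  have h2 : (x * a - y * a) * x = 0 := hx4 _ h1
  have h3 : x = y * a * x := by
    have h2' : x * a * x - y * a * x = 0 := by rw [← sub_mul]; exact h2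
    rw [← sub_eq_zero.mp h2', hx1]
  have h4 : c * (a * x - a * y) = 0 := by
    rw [mul_sub, ← mul_assoc, ← mul_assoc, hx3, hy3, sub_self]
  have h5 : y * (a * x - a * y) = 0 := hy5 _ h4
  have h6 : y * a * x = y := by
    have h5' : y * a * x - y * a * y = 0 := by
      rw [mul_assoc, mul_assoc, ← mul_sub]; exact h5
    rw [sub_eq_zero.mp h5', hy1]
  rw [h3, h6]
end

section
/- Let R be a (not necessarily unital) associative ring with involution * and let a ∈ R. Then a has a Moore–Penrose inverse if and only if a has an annihilator (a*,a*)-inverse; moreover, if x is a Moore–Penrose inverse of a and y is an annihilator (a*,a*)-inverse of a, then x = y. -/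
/-- `x` is a Moore–Penrose inverse of `a` in a ring with involution. -/
def IsMPInv {R : Type*} [NonUnitalRing R] [StarRing R] (a x : R) : Prop :=
  a * x * a = a ∧ x * a * x = x ∧ star (a * x) = a * x ∧ star (x * a) = x * a

theorem mp_iff_ann_star_star {R : Type*} [NonUnitalRing R] [StarRing R] (a : R) :
    ((∃ x : R, IsMPInv a x) ↔ (∃ y : R, IsAnnBCInv a (star a) (star a) y)) ∧
      (∀ x y : R, IsMPInv a x → IsAnnBCInv a (star a) (star a) y → x = y) := by
  have mp_to_ann : ∀ x : R, IsMPInv a x → IsAnnBCInv a (star a) (star a) x := by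
    rintro x ⟨h1, h2, h3, h4⟩
    have hb : x * a * star a = star a := by
      calc x * a * star a = star (x * a) * star a := by rw [h4]
        _ = star (a * (x * a)) := by rw [star_mul, star_mul, star_mul]
        _ = star a := by rw [← mul_assoc, h1]
    have hc : star a * a * x = star a := by
      calc star a * a * x = star a * (a * x) := by rw [mul_assoc]
        _ = star a * star (a * x) := by rw [h3]
        _ = star (a * x * a) := by rw [star_mul, star_mul, star_mul]
        _ = star a := by rw [h1]
    refine ⟨h2, hb, hc, ?_, ?_⟩
    · intro r hr
      have hx : x = star a * (star x * x) := by
        conv_lhs => rw [← h2, ← h4]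
        rw [star_mul, mul_assoc]
      rw [hx, ← mul_assoc, hr, zero_mul]
    · intro r hr
      have hx : x = (x * star x) * star a := by
        conv_lhs => rw [← h2]
        rw [mul_assoc, ← h3, star_mul, ← mul_assoc]
      rw [hx, mul_assoc, hr, mul_zero]
  have ann_to_mp : ∀ y : R, IsAnnBCInv a (star a) (star a) y → IsMPInv a y := by
    rintro y ⟨h1, h2, h3, _, _⟩
    have keyA : star y * (star a * a) = a := by
      have := congrArg star h3
      rw [star_mul, star_mul, star_star] at this
      exact this
    have keyB : a * (star a * star y) = a := by
      have := congrArg star h2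
      rw [star_mul, star_mul, star_star] at this
      simpa [mul_assoc] using this
    have hay : a * y = star y * star a := by
      calc a * y = star y * (star a * a) * y := by rw [keyA]
        _ = star y * (star a * a * y) := by simp [mul_assoc]
        _ = star y * star a := by rw [h3]
    have hya : y * a = star a * star y := by
      calc y * a = y * (a * (star a * star y)) := by rw [keyB]
        _ = y * a * star a * star y := by simp [mul_assoc]
        _ = star a * star y := by rw [h2]
    refine ⟨?_, h1, ?_, ?_⟩
    · calc a * y * a = star y * star a * a := by rw [hay]
        _ = a := by rw [mul_assoc]; exact keyA
    · rw [star_mul, hay]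
    · rw [star_mul, hya]
  have uniq : ∀ x y : R, IsMPInv a x → IsAnnBCInv a (star a) (star a) y → x = y := by
    intro x y hx hy
    obtain ⟨hx1, hxb, hxc, hxl, hxr⟩ := mp_to_ann x hx
    obtain ⟨hy1, hyb, hyc, hyl, hyr⟩ := hy
    have e1 : x = x * (a * y) := by
      have h0 : star a * (a * x - a * y) = 0 := by
        rw [mul_sub, ← mul_assoc, ← mul_assoc, hxc, hyc, sub_self]
      have := hxr _ h0
      rw [mul_sub, sub_eq_zero] at this
      rw [← this, ← mul_assoc, hx1]
    have e2 : (x * a) * y = y := by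
      have h0 : (x * a - y * a) * star a = 0 := by
        rw [sub_mul, hxb, hyb, sub_self]
      have := hyl _ h0
      rw [sub_mul, sub_eq_zero] at this
      rw [this, hy1]
    rw [e1, ← mul_assoc, e2]
  exact ⟨⟨fun ⟨x, hx⟩ => ⟨x, mp_to_ann x hx⟩, fun ⟨y, hy⟩ => ⟨y, ann_to_mp y hy⟩⟩, uniq⟩
end

section
/- Let R be a (not necessarily unital) associative ring and let a, b, c ∈ R. If x_l is a left annihilator (b,c)-inverse of a and x_r is a right annihilator (b,c)-inverse of a, then x_l·a·x_r is an annihilator (b,c)-inverse of a. -/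
/-- `x` is a left annihilator `(b,c)`-inverse of `a`. -/
def IsLAnnBCInv {R : Type*} [NonUnitalRing R] (a b c x : R) : Prop :=
  x * a * b = b ∧ (∀ r : R, c * r = 0 → x * r = 0)

/-- `y` is a right annihilator `(b,c)`-inverse of `a`. -/
def IsRAnnBCInv {R : Type*} [NonUnitalRing R] (a b c y : R) : Prop :=
  c * a * y = c ∧ (∀ r : R, r * b = 0 → r * y = 0)

theorem lann_rann_imp_ann {R : Type*} [NonUnitalRing R] (a b c xl xr : R)
    (hl : IsLAnnBCInv a b c xl) (hr : IsRAnnBCInv a b c xr) :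
    IsAnnBCInv a b c (xl * a * xr) := by
  obtain ⟨hl1, hl2⟩ := hl
  obtain ⟨hr1, hr2⟩ := hr
  -- key: x * a * b = b
  have h2 : xl * a * xr * a * b = b := by
    have hc : c * (a * (xr * (a * b)) - a * b) = 0 := by
      have : c * a * xr * a * b = c * a * b := by rw [hr1]
      rw [mul_sub]
      simpa [mul_assoc] using sub_eq_zero_of_eq (by simpa [mul_assoc] using this)
    have := hl2 _ hc
    rw [mul_sub] at this
    have h := sub_eq_zero.mp this
    calc xl * a * xr * a * b = xl * (a * (xr * (a * b))) := by simp [mul_assoc]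
      _ = xl * (a * b) := h
      _ = b := by rw [← mul_assoc]; exact hl1
  -- key: c * a * x = c
  have h3 : c * a * (xl * a * xr) = c := by
    have hb : (c * a * (xl * a) - c * a) * b = 0 := by
      rw [sub_mul]
      have : c * a * (xl * a) * b = c * a * b := by
        rw [mul_assoc (c*a), mul_assoc xl, ← mul_assoc xl, hl1]
      rw [this, sub_self]
    have := hr2 _ hb
    rw [sub_mul] at this
    have h := sub_eq_zero.mp this
    calc c * a * (xl * a * xr) = c * a * (xl * a) * xr := by simp [mul_assoc]
      _ = c * a * xr := h
      _ = c := hr1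
  refine ⟨?_, h2, h3, ?_, ?_⟩
  · -- x a x = x
    have hb : (xl * a * xr * a * (xl * a) - xl * a) * b = 0 := by
      rw [sub_mul]
      have : xl * a * xr * a * (xl * a) * b = xl * a * xr * a * b := by
        rw [mul_assoc _ (xl*a) b, hl1]
      rw [this, h2, hl1, sub_self]
    have := hr2 _ hb
    rw [sub_mul] at this
    have h := sub_eq_zero.mp this
    calc xl * a * xr * a * (xl * a * xr) = xl * a * xr * a * (xl * a) * xr := by simp [mul_assoc]
      _ = xl * a * xr := h
  · intro r hrb
    have : (r * (xl * a)) * b = 0 := by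
      rw [mul_assoc, mul_assoc, ← mul_assoc xl a b, hl1, hrb]
    have := hr2 _ this
    calc r * (xl * a * xr) = r * (xl * a) * xr := by simp [mul_assoc]
      _ = 0 := this
  · intro r hcr
    have hc : c * (a * (xr * r)) = 0 := by
      have : c * a * xr * r = c * r := by rw [hr1]
      rw [hcr] at this
      simpa [mul_assoc] using this
    have := hl2 _ hc
    calc xl * a * xr * r = xl * (a * (xr * r)) := by simp [mul_assoc]
      _ = 0 := this
end

section
/- Let R be a (not necessarily unital) associative ring and let a, b, c ∈ R. Suppose x is an annihilator (b,c)-inverse of a, x_l is a left annihilator (b,c)-inverse of a, and x_r is a right annihilator (b,c)-inverse of a. Then x = x_l if and only if x_l ∈ R·x_r, i.e. there exists t ∈ R with x_l = t·x_r. -/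
theorem eq_lann_iff_mem {R : Type*} [NonUnitalRing R] (a b c x xl xr : R)
    (hx : IsAnnBCInv a b c x) (hl : IsLAnnBCInv a b c xl) (hr : IsRAnnBCInv a b c xr) :
    x = xl ↔ ∃ t : R, xl = t * xr := by
  obtain ⟨hx1, hx2, hx3, hx4, hx5⟩ := hx
  obtain ⟨hl1, hl2⟩ := hl
  obtain ⟨hr1, hr2⟩ := hr
  -- Lemma 1 : x * a * xr = x
  have L1 : x * a * xr = x := by
    have h : x * (a * xr - a * x) = 0 := hx5 _ (by
      rw [mul_sub, ← mul_assoc, ← mul_assoc, hr1, hx3, sub_self])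
    rw [mul_sub, sub_eq_zero, ← mul_assoc, ← mul_assoc] at h
    rw [h, hx1]
  -- Lemma 2 : xl * a * x = x
  have L2 : xl * a * x = x := by
    have h : (xl * a - x * a) * x = 0 := hx4 _ (by
      rw [sub_mul, hl1, hx2, sub_self])
    rw [sub_mul, sub_eq_zero] at h
    rw [h, hx1]
  constructor
  · intro hxl
    exact ⟨x * a, by rw [← hxl, L1]⟩
  · rintro ⟨t, ht⟩
    have h1 : (t * x * a - t) * b = 0 := by
      rw [sub_mul, mul_assoc, mul_assoc, ← mul_assoc x a b, hx2, sub_self]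
    have h2 : (t * x * a - t) * xr = 0 := hr2 _ h1
    have h3 : t * x = xl := by
      rw [sub_mul, sub_eq_zero, mul_assoc, mul_assoc, ← mul_assoc x a xr, L1] at h2
      rw [h2, ← ht]
    calc x = xl * a * x := L2.symm
      _ = t * x * a * x := by rw [← h3]
      _ = t * (x * a * x) := by rw [mul_assoc, mul_assoc, mul_assoc]
      _ = t * x := by rw [hx1]
      _ = xl := h3
end

section
/- Let R be a (not necessarily unital) associative ring and let a, b, c ∈ R. If x ∈ R satisfies x·a·b = b, c·a·x = c, ∘b ⊆ ∘x, and c∘ ⊆ x∘, then x·a·x is an annihilator (b,c)-inverse of a. In this situation, x·a·x = x if and only if x ∈ R·x, i.e. there exists t ∈ R with x = t·x. -/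
theorem xax_is_ann_bc_inv {R : Type*} [NonUnitalRing R] (a b c x : R)
    (h1 : x * a * b = b) (h2 : c * a * x = c)
    (h3 : ∀ r : R, r * b = 0 → r * x = 0) (h4 : ∀ r : R, c * r = 0 → x * r = 0) :
    IsAnnBCInv a b c (x * a * x) ∧ (x * a * x = x ↔ ∃ t : R, x = t * x) := by
  have key : x * a * x * a * x = x * a * x := by
    have hb : (x * a * x * a - x * a) * b = 0 := by
      have : x * a * x * a * b = x * a * b := by
        calc x * a * x * a * b = x * a * (x * a * b) := by noncomm_ring
        _ = x * a * b := by rw [h1, h1]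
      rw [sub_mul, this, sub_self]
    have := h3 _ hb
    rw [sub_mul, sub_eq_zero] at this
    exact this
  refine ⟨⟨?_, ?_, ?_, ?_, ?_⟩, ?_, ?_⟩
  · calc x * a * x * a * (x * a * x) = (x * a * x * a * x) * a * x := by noncomm_ring
      _ = x * a * x := by rw [key, key]
  · calc x * a * x * a * b = x * a * (x * a * b) := by noncomm_ring
      _ = b := by rw [h1, h1]
  · calc c * a * (x * a * x) = (c * a * x) * a * x := by noncomm_ring
      _ = c := by rw [h2, h2]
  · intro r hr
    have := h3 r hr
    calc r * (x * a * x) = (r * x) * a * x := by noncomm_ring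
      _ = 0 := by rw [this, zero_mul, zero_mul]
  · intro r hr
    have := h4 r hr
    calc x * a * x * r = x * a * (x * r) := by noncomm_ring
      _ = 0 := by rw [this, mul_zero]
  · intro h
    exact ⟨x * a, h.symm⟩
  · rintro ⟨t, ht⟩
    have hb : (t * x * a - t) * b = 0 := by
      rw [sub_mul, mul_assoc (t * x) a b, mul_assoc t x (a * b), ← mul_assoc x a b, h1,
        sub_self]
    have := h3 _ hb
    rw [sub_mul, sub_eq_zero] at this
    calc x * a * x = (t * x) * a * x := by rw [← ht]
      _ = t * x := this
      _ = x := ht.symm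
end

section
/- Let R be a (not necessarily unital) associative ring and let a, b, c ∈ R. Suppose a has an annihilator (b,c)-inverse and x_l is a left annihilator (b,c)-inverse of a. Then ∘b ⊆ ∘(x_l·a·x_l) and x_l·a·x_l·a·x_l = x_l·a·x_l. -/
theorem lann_lemma {R : Type*} [NonUnitalRing R] (a b c xl : R)
    (h : ∃ x : R, IsAnnBCInv a b c x) (hl : IsLAnnBCInv a b c xl) :
    (∀ r : R, r * b = 0 → r * (xl * a * xl) = 0) ∧
      xl * a * xl * a * xl = xl * a * xl := by
  obtain ⟨x, hx1, hx2, hx3, hx4, hx5⟩ := h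
  obtain ⟨hl1, hl2⟩ := hl
  -- Step 1: xl * a * x = x
  have key1 : xl * a * x = x := by
    have hb : (x * a - xl * a) * b = 0 := by
      linear_combination (norm := noncomm_ring) hx2 - hl1
    have h2 := hx4 _ hb
    linear_combination (norm := noncomm_ring) -h2 + hx1
  -- Step 2: xl * a * xl = x * a * xl
  have key2 : xl * a * xl = x * a * xl := by
    have hc : c * (a * xl - a * x * (a * xl)) = 0 := by
      linear_combination (norm := noncomm_ring) -hx3 * (a * xl)
    have h2 := hl2 _ hc
    linear_combination (norm := noncomm_ring) h2 + key1 * (a * xl)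
  refine ⟨fun r hr => ?_, ?_⟩
  · have hrx := hx4 r hr
    linear_combination (norm := noncomm_ring) r * key2 + hrx * (a * xl)
  · linear_combination (norm := noncomm_ring)
      key2 * (a * xl) + (x * a) * key2 + hx1 * (a * xl) - key2
end

section
/- Let R be a (not necessarily unital) associative ring and let a, b, c ∈ R. Suppose a has an annihilator (b,c)-inverse and x_l is a left annihilator (b,c)-inverse of a. Then x_l·a·x_l is an annihilator (b,c)-inverse of a if and only if c·a·x_l = c. -/
theorem xlaxl_ann_iff {R : Type*} [NonUnitalRing R] (a b c xl : R)
    (h : ∃ x : R, IsAnnBCInv a b c x) (hl : IsLAnnBCInv a b c xl) :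
    IsAnnBCInv a b c (xl * a * xl) ↔ c * a * xl = c := by
  obtain ⟨x, hx1, hx2, hx3, hx4, hx5⟩ := h
  obtain ⟨hl1, hl2⟩ := hl
  have hl1' : xl * (a * b) = b := by rw [← mul_assoc]; exact hl1
  have hx3' : c * (a * x) = c := by rw [← mul_assoc]; exact hx3
  constructor
  · rintro ⟨hz1, hz2, hz3, hz4, hz5⟩
    -- from hz3 : c * a * (xl * a * xl) = c
    have hz3' : c * (a * (xl * (a * xl))) = c := by
      simpa only [mul_assoc] using hz3
    have h1 : (c * (a * (xl * a)) - c * a) * b = 0 := by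
      rw [sub_mul]
      have : c * (a * (xl * a)) * b = c * a * b := by
        simp only [mul_assoc, hl1']
      rw [this, sub_self]
    have h2 := hz4 _ h1
    rw [sub_mul] at h2
    have h3 : c * (a * (xl * a)) * (xl * a * xl) = c * a * (xl * a * xl) :=
      sub_eq_zero.mp h2
    -- h3 : c·a·xl·a·xl·a·xl = c·a·xl·a·xl = c
    have h4 : c * (a * (xl * (a * (xl * (a * xl))))) = c := by
      rw [show c * (a * (xl * (a * (xl * (a * xl))))) =
          c * (a * (xl * a)) * (xl * a * xl) by simp only [mul_assoc], h3]
      simpa only [mul_assoc] using hz3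
    calc c * a * xl = c * (a * xl) := by rw [mul_assoc]
      _ = (c * (a * (xl * (a * xl)))) * (a * xl) := by rw [hz3']
      _ = c * (a * (xl * (a * (xl * (a * xl))))) := by simp only [mul_assoc]
      _ = c := h4
  · intro hc
    have hc' : c * (a * xl) = c := by rw [← mul_assoc]; exact hc
    -- key identities
    have i1 : ∀ t : R, xl * (a * (x * t)) = xl * t := by
      intro t
      have h0 : c * (a * (x * t) - t) = 0 := by
        rw [mul_sub, show c * (a * (x * t)) = c * (a * x) * t by
          simp only [mul_assoc], hx3', sub_self]
      have h1 := hl2 _ h0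
      rw [mul_sub] at h1
      exact sub_eq_zero.mp h1
    have i3 : ∀ t : R, x * (a * (xl * t)) = x * t := by
      intro t
      have h0 : c * (a * (xl * t) - t) = 0 := by
        rw [mul_sub, show c * (a * (xl * t)) = c * (a * xl) * t by
          simp only [mul_assoc], hc', sub_self]
      have h1 := hx5 _ h0
      rw [mul_sub] at h1
      exact sub_eq_zero.mp h1
    have i2 : ∀ r : R, r * (xl * (a * x)) = r * x := by
      intro r
      have h0 : (r * (xl * a) - r) * b = 0 := by
        rw [sub_mul, show r * (xl * a) * b = r * b by
          simp only [mul_assoc, hl1'], sub_self]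
      have h1 := hx4 _ h0
      rw [sub_mul] at h1
      have h2 : r * (xl * a) * x = r * x := sub_eq_zero.mp h1
      rw [← h2]; simp only [mul_assoc]
    refine ⟨?_, ?_, ?_, ?_, ?_⟩
    · -- (xl*a*xl)*a*(xl*a*xl) = xl*a*xl
      have : xl * (a * (xl * (a * (xl * (a * xl))))) = xl * (a * xl) := by
        rw [← i1 (a * (xl * (a * (xl * (a * xl))))), i3, i3, i1]
      simpa only [mul_assoc] using this
    · -- (xl*a*xl)*a*b = b
      have : xl * (a * (xl * (a * b))) = b := by rw [hl1', hl1']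
      simpa only [mul_assoc] using this
    · -- c*a*(xl*a*xl) = c
      have : c * (a * (xl * (a * xl))) = c := by
        rw [show a * (xl * (a * xl)) = (a * xl) * (a * xl) by
          simp only [mul_assoc], ← mul_assoc, hc', hc']
      simpa only [mul_assoc] using this
    · intro r hr
      have hrx : r * x = 0 := hx4 r hr
      have : r * (xl * (a * xl)) = 0 := by
        rw [← i1 (a * xl), show r * (xl * (a * (x * (a * xl)))) =
          r * (xl * (a * x)) * (a * xl) by simp only [mul_assoc], i2, hrx,
          zero_mul]
      simpa only [mul_assoc] using this
    · intro r hr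
      have hxlr : xl * r = 0 := hl2 r hr
      have : xl * (a * (xl * r)) = 0 := by rw [hxlr, mul_zero, mul_zero]
      simpa only [mul_assoc] using this
end

section
/- Let R be a (not necessarily unital) associative ring that is left faithful, i.e. the only element x ∈ R with x·r = 0 for all r ∈ R is x = 0. Let a, b, c ∈ R and suppose x is an annihilator (b,c)-inverse of a. Then every left annihilator (b,c)-inverse of a is equal to x; in particular, a has a unique left annihilator (b,c)-inverse. -/
theorem lann_unique_of_leftFaithful {R : Type*} [NonUnitalRing R]
    (faithful : ∀ x : R, (∀ r : R, x * r = 0) → x = 0)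
    (a b c x : R) (hx : IsAnnBCInv a b c x) :
    ∀ xl : R, IsLAnnBCInv a b c xl → xl = x := by
  obtain ⟨hxax, hxab, hcax, hlb, hrc⟩ := hx
  rintro xl ⟨hlab, hlrc⟩
  -- xl * a * x = x
  have h1 : (xl * a - x * a) * b = 0 := by
    rw [sub_mul, hlab, hxab, sub_self]
  have h2 : (xl * a - x * a) * x = 0 := hlb _ h1
  have h3 : xl * a * x = x := by
    rw [sub_mul, sub_eq_zero] at h2
    rw [h2, hxax]
  have key : ∀ r : R, (xl - x) * r = 0 := by
    intro r
    have hc : c * (a * x * r - r) = 0 := by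
      rw [mul_sub, ← mul_assoc, ← mul_assoc, hcax, sub_self]
    have hxl : xl * (a * x * r - r) = 0 := hlrc _ hc
    have hx' : x * (a * x * r - r) = 0 := hrc _ hc
    rw [mul_sub, sub_eq_zero] at hxl
    rw [sub_mul, ← hxl, ← mul_assoc, ← mul_assoc, h3, sub_self]
  exact sub_eq_zero.mp (faithful _ key)
end

section
/- Let R be a (not necessarily unital) associative ring and let a, b, c ∈ R. Suppose x_l is a left annihilator (b,c)-inverse of a, and suppose t ∈ R is a Drazin inverse of x_l·a. Then t·x_l is a regular left annihilator (b,c)-inverse of a, i.e. (t·x_l)·a·b = b, c∘ ⊆ (t·x_l)∘, and (t·x_l)·a·(t·x_l) = t·x_l. -/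
/-- `pw a n = a ^ (n + 1)`, powers in a non-unital ring. -/
def pw {R : Type*} [NonUnitalRing R] (a : R) : ℕ → R
  | 0 => a
  | n + 1 => pw a n * a

/-- `t` is a Drazin inverse of `d`: for some positive integer `m`,
`d^(m+1) * t = d^m`, together with `t * t * d = t` and `d * t = t * d`.
Here `pw d k = d^(k+1)`, so the exponent condition ranges over positive integers. -/
def IsDrazinInv {R : Type*} [NonUnitalRing R] (d t : R) : Prop :=
  (∃ m : ℕ, pw d (m + 1) * t = pw d m) ∧ t * t * d = t ∧ d * t = t * d

theorem regular_lann_of_drazin {R : Type*} [NonUnitalRing R] (a b c xl t : R)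
    (hl : IsLAnnBCInv a b c xl) (ht : IsDrazinInv (xl * a) t) :
    t * xl * a * b = b ∧ (∀ r : R, c * r = 0 → t * xl * r = 0) ∧
      t * xl * a * (t * xl) = t * xl := by
  obtain ⟨hab, hann⟩ := hl
  obtain ⟨⟨m, hm⟩, htt, hcomm⟩ := ht
  have hdb : xl * a * b = b := hab
  have hpb : ∀ n, pw (xl * a) n * b = b := by
    intro n
    induction n with
    | zero => exact hdb
    | succ n ih => show pw (xl * a) n * (xl * a) * b = b; rw [mul_assoc, hdb, ih]
  have hcommn : ∀ n, t * pw (xl * a) n = pw (xl * a) n * t := by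
    intro n
    induction n with
    | zero => exact hcomm.symm
    | succ n ih =>
      show t * (pw (xl * a) n * (xl * a)) = pw (xl * a) n * (xl * a) * t
      rw [← mul_assoc, ih, mul_assoc _ t, ← hcomm, ← mul_assoc]
  have htb : t * b = b := by
    have h := hpb (m + 1)
    calc t * b = t * (pw (xl * a) (m + 1) * b) := by rw [h]
    _ = t * pw (xl * a) (m + 1) * b := by rw [mul_assoc]
    _ = pw (xl * a) (m + 1) * t * b := by rw [hcommn]
    _ = pw (xl * a) m * b := by rw [hm]
    _ = b := hpb m
  refine ⟨?_, ?_, ?_⟩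
  · calc t * xl * a * b = t * (xl * a * b) := by rw [mul_assoc, mul_assoc, ← mul_assoc xl a b]
    _ = b := by rw [hab, htb]
  · intro r hr
    rw [mul_assoc, hann r hr, mul_zero]
  · calc t * xl * a * (t * xl) = t * (xl * a * t) * xl := by noncomm_ring
    _ = t * (t * (xl * a)) * xl := by rw [hcomm]
    _ = t * t * (xl * a) * xl := by rw [mul_assoc t t]
    _ = t * xl := by rw [htt]
end

section
/- Let R be a (not necessarily unital) associative ring, let a_i, b_i, c_i ∈ R and suppose x_i is an annihilator (b_i,c_i)-inverse of a_i for i = 1, 2. Then for any y ∈ R, y·x₁ = x₂·y if and only if c₂·y·a₁·b₁ = c₂·a₂·y·b₁, y·b₁ = x₂·a₂·y·b₁, and c₂·y = c₂·y·a₁·x₁ (the last two conditions being equivalent, respectively, to y·b₁ ∈ x₂·R and c₂·y ∈ R·x₁). -/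
theorem intertwining_ann {R : Type*} [NonUnitalRing R]
    (a₁ b₁ c₁ x₁ a₂ b₂ c₂ x₂ : R)
    (h₁ : IsAnnBCInv a₁ b₁ c₁ x₁) (h₂ : IsAnnBCInv a₂ b₂ c₂ x₂) (y : R) :
    (y * x₁ = x₂ * y ↔
      c₂ * y * a₁ * b₁ = c₂ * a₂ * y * b₁ ∧ y * b₁ = x₂ * a₂ * y * b₁ ∧
        c₂ * y = c₂ * y * a₁ * x₁) ∧
    (y * b₁ = x₂ * a₂ * y * b₁ ↔ ∃ r : R, y * b₁ = x₂ * r) ∧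
    (c₂ * y = c₂ * y * a₁ * x₁ ↔ ∃ r : R, c₂ * y = r * x₁) := by
  obtain ⟨e1, e2, e3, l1, r1⟩ := h₁
  obtain ⟨f1, f2, f3, l2, r2⟩ := h₂
  constructor
  · constructor
    · intro h
      refine ⟨?_, ?_, ?_⟩
      · calc c₂ * y * a₁ * b₁ = c₂ * a₂ * x₂ * y * a₁ * b₁ := by rw [f3]
          _ = c₂ * a₂ * (y * x₁) * a₁ * b₁ := by rw [h]; noncomm_ring
          _ = c₂ * a₂ * y * (x₁ * a₁ * b₁) := by noncomm_ring
          _ = c₂ * a₂ * y * b₁ := by rw [e2]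
      · calc y * b₁ = y * (x₁ * a₁ * b₁) := by rw [e2]
          _ = (y * x₁) * (a₁ * b₁) := by noncomm_ring
          _ = x₂ * y * (a₁ * b₁) := by rw [h]
          _ = x₂ * a₂ * (x₂ * y) * (a₁ * b₁) := by rw [show x₂ * a₂ * (x₂ * y) = x₂ * y by rw [← mul_assoc, f1]]
          _ = x₂ * a₂ * (y * x₁) * (a₁ * b₁) := by rw [h]
          _ = x₂ * a₂ * y * (x₁ * a₁ * b₁) := by noncomm_ring
          _ = x₂ * a₂ * y * b₁ := by rw [e2]
      · calc c₂ * y = c₂ * a₂ * x₂ * y := by rw [f3]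
          _ = c₂ * a₂ * (y * x₁) := by rw [h]; noncomm_ring
          _ = c₂ * a₂ * (y * (x₁ * a₁ * x₁)) := by rw [e1]
          _ = c₂ * a₂ * (y * x₁) * (a₁ * x₁) := by noncomm_ring
          _ = c₂ * a₂ * (x₂ * y) * (a₁ * x₁) := by rw [h]
          _ = c₂ * a₂ * x₂ * y * a₁ * x₁ := by noncomm_ring
          _ = c₂ * y * a₁ * x₁ := by rw [f3]
    · rintro ⟨h3, h2, h4⟩
      -- y * x₁ = x₂ * a₂ * y * x₁
      have k1 : y * x₁ = x₂ * a₂ * y * x₁ := by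
        have : (y - x₂ * a₂ * y) * b₁ = 0 := by
          rw [sub_mul, sub_eq_zero]; exact h2
        have := l1 _ this
        rw [sub_mul, sub_eq_zero] at this
        exact this
      -- x₂ * y = x₂ * (y * a₁ * x₁)
      have k2 : x₂ * y = x₂ * (y * a₁ * x₁) := by
        have : c₂ * (y - y * a₁ * x₁) = 0 := by
          rw [mul_sub, sub_eq_zero, ← mul_assoc, ← mul_assoc]; exact h4
        have := r2 _ this
        rw [mul_sub, sub_eq_zero] at this
        exact this
      -- c₂ * (y * a₁) * x₁ = c₂ * (a₂ * y) * x₁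
      have k3 : c₂ * y * a₁ * x₁ = c₂ * a₂ * y * x₁ := by
        have : (c₂ * y * a₁ - c₂ * a₂ * y) * b₁ = 0 := by
          rw [sub_mul, sub_eq_zero]; exact h3
        have := l1 _ this
        rw [sub_mul, sub_eq_zero] at this
        exact this
      -- x₂ * (y * a₁ * x₁) = x₂ * (a₂ * y * x₁)
      have k4 : x₂ * (y * a₁ * x₁) = x₂ * (a₂ * (y * x₁)) := by
        have : c₂ * (y * a₁ * x₁ - a₂ * (y * x₁)) = 0 := by
          rw [mul_sub, sub_eq_zero]
          calc c₂ * (y * a₁ * x₁) = c₂ * y * a₁ * x₁ := by noncomm_ring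
            _ = c₂ * a₂ * y * x₁ := k3
            _ = c₂ * (a₂ * (y * x₁)) := by noncomm_ring
        have := r2 _ this
        rw [mul_sub, sub_eq_zero] at this
        exact this
      calc y * x₁ = x₂ * a₂ * y * x₁ := k1
        _ = x₂ * (a₂ * (y * x₁)) := by noncomm_ring
        _ = x₂ * (y * a₁ * x₁) := k4.symm
        _ = x₂ * y := k2.symm
  constructor
  · constructor
    · intro h
      exact ⟨a₂ * (y * b₁), h.trans (by noncomm_ring)⟩
    · rintro ⟨r, hr⟩
      calc y * b₁ = x₂ * r := hr
        _ = x₂ * a₂ * x₂ * r := by rw [f1]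
        _ = x₂ * a₂ * (x₂ * r) := by noncomm_ring
        _ = x₂ * a₂ * (y * b₁) := by rw [hr]
        _ = x₂ * a₂ * y * b₁ := by noncomm_ring
  · constructor
    · intro h
      exact ⟨c₂ * y * a₁, h⟩
    · rintro ⟨r, hr⟩
      calc c₂ * y = r * x₁ := hr
        _ = r * (x₁ * a₁ * x₁) := by rw [e1]
        _ = r * x₁ * a₁ * x₁ := by noncomm_ring
        _ = c₂ * y * a₁ * x₁ := by rw [hr]
end

section
/- Let R be a (not necessarily unital) associative ring and let a ∈ R. Then a has a Drazin inverse if and only if there exists a positive integer m such that a has an annihilator (a^m,a^m)-inverse. Moreover, if x is a Drazin inverse of a and y is an annihilator (a^m,a^m)-inverse of a for some positive integer m, then x = y. -/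
section aux
variable {R : Type*} [NonUnitalRing R]

lemma pw_succ' (a : R) (n : ℕ) : pw a (n+1) = a * pw a n := by
  induction n with
  | zero => rfl
  | succ k ih =>
    show pw a (k+1) * a = a * (pw a k * a)
    rw [ih, mul_assoc]

lemma pw_comm (a x : R) (h : a * x = x * a) : ∀ n, pw a n * x = x * pw a n
  | 0 => h
  | n+1 => by
    show (pw a n * a) * x = x * (pw a n * a)
    rw [mul_assoc, h, ← mul_assoc, pw_comm a x h n, mul_assoc]

lemma pw_comm₂ (a x : R) (h : a * x = x * a) (j k : ℕ) :
    pw x j * pw a k = pw a k * pw x j :=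
  pw_comm x (pw a k) (pw_comm a x h k).symm j

lemma DL1 (a x : R) (m : ℕ) (hm : pw a (m+1) * x = pw a m) :
    ∀ j, pw a (m+j+1) * x = pw a (m+j)
  | 0 => hm
  | j+1 => by
    show pw a (m+j+1+1) * x = pw a (m+j+1)
    rw [pw_succ' a (m+j+1), mul_assoc, DL1 a x m hm j, ← pw_succ']

lemma DL2 (a x : R) (hxx : x * x * a = x) (hc : a * x = x * a) :
    ∀ n, pw x (n+1) * pw a n = x
  | 0 => hxx
  | n+1 => by
    show (pw x (n+1) * x) * (pw a n * a) = x
    rw [mul_assoc (pw x (n+1)) x, ← mul_assoc x (pw a n) a, ← pw_comm a x hc n]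
    simp only [← mul_assoc]
    rw [DL2 a x hxx hc n]
    exact hxx

lemma DL3 (a x : R) (m : ℕ) (hm : pw a (m+1) * x = pw a m) (hc : a * x = x * a) :
    ∀ j n, pw x j * pw a (m+j+n+1) = pw a (m+n)
  | 0, n => by
    show x * pw a (m+n+1) = pw a (m+n)
    rw [← pw_comm a x hc (m+n+1)]
    exact DL1 a x m hm n
  | j+1, n => by
    have e : m+(j+1)+n+1 = m+j+(n+1)+1 := by omega
    show pw x (j+1) * pw a (m+(j+1)+n+1) = pw a (m+n)
    rw [e, pw_succ' x j, mul_assoc, DL3 a x m hm hc j (n+1)]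
    show x * pw a (m+n+1) = pw a (m+n)
    rw [← pw_comm a x hc (m+n+1)]
    exact DL1 a x m hm n

lemma fwd (a x : R) (hx : IsDrazinInv a x) :
    ∃ m, IsAnnBCInv a (pw a m) (pw a m) x := by
  obtain ⟨⟨m, hm⟩, hxx, hc⟩ := hx
  refine ⟨m, ?_, ?_, hm, ?_, ?_⟩
  · rw [mul_assoc, hc, ← mul_assoc]; exact hxx
  · rw [mul_assoc, ← pw_succ', ← pw_comm a x hc (m+1)]; exact hm
  · intro r hr
    have hx2 : pw a m * pw x (m+1) = x := by
      rw [← pw_comm₂ a x hc (m+1) m]; exact DL2 a x hxx hc m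
    rw [← hx2, ← mul_assoc, hr, zero_mul]
  · intro r hr
    rw [← DL2 a x hxx hc m, mul_assoc, hr, mul_zero]

lemma bwd (a y : R) (m : ℕ) (hy : IsAnnBCInv a (pw a m) (pw a m) y) :
    IsDrazinInv a y := by
  obtain ⟨h1, h2, h3, h4, h5⟩ := hy
  have h2' : y * pw a (m+1) = pw a m := by
    rw [pw_succ', ← mul_assoc]; exact h2
  have h3' : pw a (m+1) * y = pw a m := h3
  have hA : a * y * pw a m = pw a m := by
    calc a * y * pw a m = a * y * (pw a (m+1) * y) := by rw [h3']
      _ = (a * (y * pw a (m+1))) * y := by rw [← mul_assoc, mul_assoc a y]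
      _ = a * pw a m * y := by rw [h2']
      _ = pw a (m+1) * y := by rw [← pw_succ']
      _ = pw a m := h3'
  have hB : a * y * y = y := by
    have h0 : (a * y - y * a) * pw a m = 0 := by
      rw [sub_mul, hA, mul_assoc, ← pw_succ', h2', sub_self]
    have h6 := h4 _ h0
    rw [sub_mul, sub_eq_zero] at h6
    rw [h6]
    exact h1
  have hC0 : pw a m * y * a = pw a m := by
    calc pw a m * y * a = (y * pw a (m+1)) * y * a := by rw [h2']
      _ = (y * (pw a (m+1) * y)) * a := by rw [mul_assoc y]
      _ = y * pw a m * a := by rw [h3']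
      _ = y * pw a (m+1) := mul_assoc y (pw a m) a
      _ = pw a m := h2'
  have hC : y * y * a = y := by
    have h0 : pw a m * (a * y - y * a) = 0 := by
      rw [mul_sub, ← mul_assoc, ← mul_assoc, hC0]
      have : pw a m * a * y = pw a m := h3
      rw [this, sub_self]
    have h6 := h5 _ h0
    rw [mul_sub, sub_eq_zero, ← mul_assoc, ← mul_assoc] at h6
    rw [← h6]
    exact h1
  have hcomm : a * y = y * a := by
    calc a * y = a * (y * y * a) := by rw [hC]
      _ = a * y * y * a := by simp only [mul_assoc]
      _ = y * a := by rw [hB]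
  exact ⟨⟨m, h3'⟩, hC, hcomm⟩

lemma uniq (a x y : R) (hx : IsDrazinInv a x) (hy : IsDrazinInv a y) : x = y := by
  obtain ⟨⟨mx, hmx⟩, hxx, hcx⟩ := hx
  obtain ⟨⟨my, hmy⟩, hyy, hcy⟩ := hy
  have e1 : pw a my * pw x (my+1) = x := by
    rw [← pw_comm₂ a x hcx]; exact DL2 a x hxx hcx my
  have e2 := DL3 a y my hmy hcy (mx+1) 0
  have e3 := DL3 a x mx hmx hcx (my+1) 0
  simp only [Nat.add_zero] at e2 e3
  have eK : my+(mx+1)+1 = mx+(my+1)+1 := by omega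
  rw [eK] at e2
  have e3' : pw a (mx+(my+1)+1) * pw x (my+1) = pw a mx := by
    rw [← pw_comm₂ a x hcx]; exact e3
  have e4 : pw y (mx+1) * pw a mx = y := DL2 a y hyy hcy mx
  calc x = pw a my * pw x (my+1) := e1.symm
    _ = (pw y (mx+1) * pw a (mx+(my+1)+1)) * pw x (my+1) := by rw [e2]
    _ = pw y (mx+1) * (pw a (mx+(my+1)+1) * pw x (my+1)) := mul_assoc _ _ _
    _ = pw y (mx+1) * pw a mx := by rw [e3']
    _ = y := e4

end aux

theorem drazin_iff_ann_pow {R : Type*} [NonUnitalRing R] (a : R) :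
    ((∃ x : R, IsDrazinInv a x) ↔
      (∃ (m : ℕ) (y : R), IsAnnBCInv a (pw a m) (pw a m) y)) ∧
    (∀ (x y : R) (m : ℕ), IsDrazinInv a x → IsAnnBCInv a (pw a m) (pw a m) y →
      x = y) := by
  constructor
  · constructor
    · rintro ⟨x, hx⟩
      obtain ⟨m, h⟩ := fwd a x hx
      exact ⟨m, x, h⟩
    · rintro ⟨m, y, hy⟩
      exact ⟨y, bwd a y m hy⟩
  · intro x y m hx hy
    exact uniq a x y hx (bwd a y m hy)
end

section
/- Let S be a semigroup, let a_i, b_i, c_i ∈ S and suppose x_i is a (b_i,c_i)-inverse of a_i for i = 1, 2. Then for any y ∈ S, y·x₁ = x₂·y if and only if c₂·y·a₁·b₁ = c₂·a₂·y·b₁, y·b₁ ∈ b₂·S, and c₂·y ∈ S·c₁ (the last two conditions being equivalent, respectively, to y·b₁ = x₂·a₂·y·b₁ and c₂·y = c₂·y·a₁·x₁). -/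
/-- `x` is a `(b,c)`-inverse of `a` in a semigroup. -/
def IsBCInv {S : Type*} [Semigroup S] (a b c x : S) : Prop :=
  x * a * b = b ∧ c * a * x = c ∧ (∃ s : S, x = b * s) ∧ (∃ s : S, x = s * c)

theorem intertwining_bc {S : Type*} [Semigroup S]
    (a₁ b₁ c₁ x₁ a₂ b₂ c₂ x₂ : S)
    (h₁ : IsBCInv a₁ b₁ c₁ x₁) (h₂ : IsBCInv a₂ b₂ c₂ x₂) (y : S) :
    (y * x₁ = x₂ * y ↔
      c₂ * y * a₁ * b₁ = c₂ * a₂ * y * b₁ ∧ (∃ s : S, y * b₁ = b₂ * s) ∧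
        (∃ s : S, c₂ * y = s * c₁)) ∧
    ((∃ s : S, y * b₁ = b₂ * s) ↔ y * b₁ = x₂ * a₂ * y * b₁) ∧
    ((∃ s : S, c₂ * y = s * c₁) ↔ c₂ * y = c₂ * y * a₁ * x₁) := by
  obtain ⟨e1, f1, ⟨s₁, hs₁⟩, ⟨t₁, ht₁⟩⟩ := h₁
  obtain ⟨e2, f2, ⟨s₂, hs₂⟩, ⟨t₂, ht₂⟩⟩ := h₂
  have f1' : c₁ * (a₁ * x₁) = c₁ := by rw [← mul_assoc, f1]
  have e2' : x₂ * (a₂ * b₂) = b₂ := by rw [← mul_assoc, e2]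
  have f2' : c₂ * (a₂ * x₂) = c₂ := by rw [← mul_assoc, f2]
  have part2 : (∃ s : S, y * b₁ = b₂ * s) ↔ y * b₁ = x₂ * a₂ * y * b₁ := by
    constructor
    · rintro ⟨s, hs⟩
      rw [mul_assoc (x₂ * a₂) y b₁, hs, ← mul_assoc, e2]
    · intro h
      refine ⟨s₂ * (a₂ * (y * b₁)), ?_⟩
      conv_lhs => rw [h, hs₂]
      simp only [mul_assoc]
  have part3 : (∃ s : S, c₂ * y = s * c₁) ↔ c₂ * y = c₂ * y * a₁ * x₁ := by
    constructor
    · rintro ⟨s, hs⟩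
      rw [hs, mul_assoc s, mul_assoc s, f1]
    · intro h
      refine ⟨c₂ * (y * (a₁ * t₁)), ?_⟩
      conv_lhs => rw [h, ht₁]
      simp only [mul_assoc]
  refine ⟨⟨?_, ?_⟩, part2, part3⟩
  · intro h
    have key : c₂ * (a₂ * (y * (x₁ * (a₁ * b₁)))) = c₂ * (y * (a₁ * b₁)) := by
      have hh : y * (x₁ * (a₁ * b₁)) = (y * x₁) * (a₁ * b₁) := (mul_assoc _ _ _).symm
      rw [hh, h, mul_assoc x₂, ← mul_assoc a₂, ← mul_assoc c₂, f2']
    refine ⟨?_, ⟨s₂ * (y * (a₁ * b₁)), ?_⟩, ⟨c₂ * (a₂ * (y * t₁)), ?_⟩⟩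
    · conv_rhs => rw [← e1]
      simp only [mul_assoc]
      exact key.symm
    · conv_lhs => rw [← e1, ← mul_assoc, ← mul_assoc, h, hs₂]
      simp only [mul_assoc]
    · conv_lhs => rw [← f2, mul_assoc (c₂ * a₂) x₂ y, ← h, ht₁]
      simp only [mul_assoc]
  · rintro ⟨hA, hB, hC⟩
    have hB' : y * b₁ = x₂ * a₂ * y * b₁ := part2.mp hB
    have hC' : c₂ * y = c₂ * y * a₁ * x₁ := part3.mp hC
    have L : y * x₁ = x₂ * (a₂ * (y * x₁)) := by
      conv_lhs => rw [hs₁, ← mul_assoc, hB']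
      simp only [mul_assoc]
      rw [← hs₁]
    have R : x₂ * y = x₂ * (a₂ * (y * x₁)) := by
      conv_lhs => rw [ht₂, mul_assoc, hC', hs₁, ← mul_assoc (c₂ * y * a₁) b₁ s₁, hA]
      simp only [mul_assoc]
      rw [← hs₁, ← mul_assoc t₂ c₂, ← ht₂]
    exact L.trans R.symm
end

section
/- Let R be a (not necessarily unital) associative ring, let a_i, b_i, c_i ∈ R and suppose x_i is an annihilator (b_i,c_i)-inverse of a_i for i = 1, 2. Then for any y ∈ R: (i) y·a₁·x₁ = a₂·x₂·y if and only if y·a₁·b₁ ∈ a₂·x₂·R and c₂·y ∈ R·x₁; (ii) y·x₁·a₁ = x₂·a₂·y if and only if y·b₁ ∈ x₂·R and c₂·a₂·y ∈ R·x₁·a₁; (iii) y·a₁·x₁ = x₂·a₂·y if and only if y·a₁·b₁ ∈ x₂·R and c₂·a₂·y ∈ R·x₁; (iv) y·x₁·a₁ = a₂·x₂·y if and only if y·b₁ ∈ a₂·x₂·R and c₂·y ∈ R·x₁·a₁. -/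
private lemma cancelL {R : Type*} [NonUnitalRing R] {b x u v : R}
    (L : ∀ r : R, r * b = 0 → r * x = 0) (h : u * b = v * b) : u * x = v * x := by
  have h2 := L (u - v) (by rw [sub_mul, h, sub_self])
  rwa [sub_mul, sub_eq_zero] at h2

private lemma cancelR {R : Type*} [NonUnitalRing R] {c x u v : R}
    (Rh : ∀ r : R, c * r = 0 → x * r = 0) (h : c * u = c * v) : x * u = x * v := by
  have h2 := Rh (u - v) (by rw [mul_sub, h, sub_self])
  rwa [mul_sub, sub_eq_zero] at h2

theorem intertwining_special_ann {R : Type*} [NonUnitalRing R]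
    (a₁ b₁ c₁ x₁ a₂ b₂ c₂ x₂ : R)
    (h₁ : IsAnnBCInv a₁ b₁ c₁ x₁) (h₂ : IsAnnBCInv a₂ b₂ c₂ x₂) (y : R) :
    (y * a₁ * x₁ = a₂ * x₂ * y ↔
      (∃ r : R, y * a₁ * b₁ = a₂ * x₂ * r) ∧ (∃ r : R, c₂ * y = r * x₁)) ∧
    (y * x₁ * a₁ = x₂ * a₂ * y ↔
      (∃ r : R, y * b₁ = x₂ * r) ∧ (∃ r : R, c₂ * a₂ * y = r * x₁ * a₁)) ∧
    (y * a₁ * x₁ = x₂ * a₂ * y ↔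
      (∃ r : R, y * a₁ * b₁ = x₂ * r) ∧ (∃ r : R, c₂ * a₂ * y = r * x₁)) ∧
    (y * x₁ * a₁ = a₂ * x₂ * y ↔
      (∃ r : R, y * b₁ = a₂ * x₂ * r) ∧ (∃ r : R, c₂ * y = r * x₁ * a₁)) := by
  obtain ⟨hx₁, hb₁, hc₁, L₁, R₁⟩ := h₁
  obtain ⟨hx₂, hb₂, hc₂, L₂, R₂⟩ := h₂
  simp only [mul_assoc] at hx₁ hb₁ hc₁ hx₂ hb₂ hc₂ ⊢
  refine ⟨⟨?_, ?_⟩, ⟨?_, ?_⟩, ⟨?_, ?_⟩, ⟨?_, ?_⟩⟩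
  -- Part (i) forward
  · intro h
    refine ⟨⟨y * (a₁ * b₁), ?_⟩, ⟨c₂ * (y * a₁), ?_⟩⟩
    · calc y * (a₁ * b₁) = y * (a₁ * (x₁ * (a₁ * b₁))) := by rw [hb₁]
        _ = y * (a₁ * x₁) * (a₁ * b₁) := by simp only [mul_assoc]
        _ = a₂ * (x₂ * y) * (a₁ * b₁) := by rw [h]
        _ = a₂ * (x₂ * (y * (a₁ * b₁))) := by simp only [mul_assoc]
    · calc c₂ * y = c₂ * (a₂ * x₂) * y := by rw [hc₂]
        _ = c₂ * (a₂ * (x₂ * y)) := by simp only [mul_assoc]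
        _ = c₂ * (y * (a₁ * x₁)) := by rw [← h]
        _ = c₂ * (y * a₁) * x₁ := by simp only [mul_assoc]
  -- Part (i) backward
  · rintro ⟨⟨r, hr⟩, ⟨s, hs⟩⟩
    have e1 : (y * a₁) * x₁ = (a₂ * (x₂ * (y * a₁))) * x₁ := by
      refine cancelL L₁ ?_
      have key : a₂ * (x₂ * (a₂ * (x₂ * r))) = a₂ * (x₂ * r) := by
        have := congrArg (fun t => a₂ * (t * r)) hx₂
        simpa only [mul_assoc] using this
      calc (y * a₁) * b₁ = a₂ * (x₂ * r) := by rw [mul_assoc, hr]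
        _ = a₂ * (x₂ * (a₂ * (x₂ * r))) := key.symm
        _ = a₂ * (x₂ * (y * (a₁ * b₁))) := by rw [hr]
        _ = (a₂ * (x₂ * (y * a₁))) * b₁ := by simp only [mul_assoc]
    have e2 : x₂ * y = x₂ * (y * (a₁ * x₁)) := by
      refine cancelR R₂ ?_
      calc c₂ * y = s * x₁ := hs
        _ = s * (x₁ * (a₁ * x₁)) := by rw [hx₁]
        _ = (s * x₁) * (a₁ * x₁) := by simp only [mul_assoc]
        _ = (c₂ * y) * (a₁ * x₁) := by rw [hs]
        _ = c₂ * (y * (a₁ * x₁)) := by simp only [mul_assoc]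
    simp only [mul_assoc] at e1
    rw [e1, ← e2]
  -- Part (ii) forward
  · intro h
    refine ⟨⟨a₂ * (y * b₁), ?_⟩, ⟨c₂ * (a₂ * y), ?_⟩⟩
    · calc y * b₁ = y * (x₁ * (a₁ * b₁)) := by rw [hb₁]
        _ = y * (x₁ * a₁) * b₁ := by simp only [mul_assoc]
        _ = x₂ * (a₂ * y) * b₁ := by rw [h]
        _ = x₂ * (a₂ * (y * b₁)) := by simp only [mul_assoc]
    · calc c₂ * (a₂ * y) = c₂ * (a₂ * x₂) * (a₂ * y) := by rw [hc₂]
        _ = c₂ * (a₂ * (x₂ * (a₂ * y))) := by simp only [mul_assoc]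
        _ = c₂ * (a₂ * (y * (x₁ * a₁))) := by rw [← h]
        _ = c₂ * (a₂ * y) * (x₁ * a₁) := by simp only [mul_assoc]
  -- Part (ii) backward
  · rintro ⟨⟨r, hr⟩, ⟨s, hs⟩⟩
    have e1 : y * x₁ = (x₂ * (a₂ * y)) * x₁ := by
      refine cancelL L₁ ?_
      have key : x₂ * (a₂ * (x₂ * r)) = x₂ * r := by
        have := congrArg (fun t => t * r) hx₂
        simpa only [mul_assoc] using this
      calc y * b₁ = x₂ * r := hr
        _ = x₂ * (a₂ * (x₂ * r)) := key.symm
        _ = x₂ * (a₂ * (y * b₁)) := by rw [hr]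
        _ = (x₂ * (a₂ * y)) * b₁ := by simp only [mul_assoc]
    have e2 : x₂ * (a₂ * y) = x₂ * (a₂ * (y * (x₁ * a₁))) := by
      refine cancelR R₂ ?_
      have key : x₁ * (a₁ * (x₁ * a₁)) = x₁ * a₁ := by
        have := congrArg (fun t => t * a₁) hx₁
        simpa only [mul_assoc] using this
      calc c₂ * (a₂ * y) = s * (x₁ * a₁) := hs
        _ = s * (x₁ * (a₁ * (x₁ * a₁))) := by rw [key]
        _ = (s * (x₁ * a₁)) * (x₁ * a₁) := by simp only [mul_assoc]
        _ = (c₂ * (a₂ * y)) * (x₁ * a₁) := by rw [hs]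
        _ = c₂ * (a₂ * (y * (x₁ * a₁))) := by simp only [mul_assoc]
    have e1' := congrArg (fun t => t * a₁) e1
    simp only [mul_assoc] at e1'
    rw [e1', ← e2]
  -- Part (iii) forward
  · intro h
    refine ⟨⟨a₂ * (y * (a₁ * b₁)), ?_⟩, ⟨c₂ * (a₂ * (y * a₁)), ?_⟩⟩
    · calc y * (a₁ * b₁) = y * (a₁ * (x₁ * (a₁ * b₁))) := by rw [hb₁]
        _ = y * (a₁ * x₁) * (a₁ * b₁) := by simp only [mul_assoc]
        _ = x₂ * (a₂ * y) * (a₁ * b₁) := by rw [h]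
        _ = x₂ * (a₂ * (y * (a₁ * b₁))) := by simp only [mul_assoc]
    · calc c₂ * (a₂ * y) = c₂ * (a₂ * x₂) * (a₂ * y) := by rw [hc₂]
        _ = c₂ * (a₂ * (x₂ * (a₂ * y))) := by simp only [mul_assoc]
        _ = c₂ * (a₂ * (y * (a₁ * x₁))) := by rw [← h]
        _ = c₂ * (a₂ * (y * a₁)) * x₁ := by simp only [mul_assoc]
  -- Part (iii) backward
  · rintro ⟨⟨r, hr⟩, ⟨s, hs⟩⟩
    have e1 : (y * a₁) * x₁ = (x₂ * (a₂ * (y * a₁))) * x₁ := by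
      refine cancelL L₁ ?_
      have key : x₂ * (a₂ * (x₂ * r)) = x₂ * r := by
        have := congrArg (fun t => t * r) hx₂
        simpa only [mul_assoc] using this
      calc (y * a₁) * b₁ = x₂ * r := by rw [mul_assoc, hr]
        _ = x₂ * (a₂ * (x₂ * r)) := key.symm
        _ = x₂ * (a₂ * (y * (a₁ * b₁))) := by rw [hr]
        _ = (x₂ * (a₂ * (y * a₁))) * b₁ := by simp only [mul_assoc]
    have e2 : x₂ * (a₂ * y) = x₂ * (a₂ * (y * (a₁ * x₁))) := by
      refine cancelR R₂ ?_
      calc c₂ * (a₂ * y) = s * x₁ := hs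
        _ = s * (x₁ * (a₁ * x₁)) := by rw [hx₁]
        _ = (s * x₁) * (a₁ * x₁) := by simp only [mul_assoc]
        _ = (c₂ * (a₂ * y)) * (a₁ * x₁) := by rw [hs]
        _ = c₂ * (a₂ * (y * (a₁ * x₁))) := by simp only [mul_assoc]
    simp only [mul_assoc] at e1
    rw [e1, ← e2]
  -- Part (iv) forward
  · intro h
    refine ⟨⟨y * b₁, ?_⟩, ⟨c₂ * y, ?_⟩⟩
    · calc y * b₁ = y * (x₁ * (a₁ * b₁)) := by rw [hb₁]
        _ = y * (x₁ * a₁) * b₁ := by simp only [mul_assoc]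
        _ = a₂ * (x₂ * y) * b₁ := by rw [h]
        _ = a₂ * (x₂ * (y * b₁)) := by simp only [mul_assoc]
    · calc c₂ * y = c₂ * (a₂ * x₂) * y := by rw [hc₂]
        _ = c₂ * (a₂ * (x₂ * y)) := by simp only [mul_assoc]
        _ = c₂ * (y * (x₁ * a₁)) := by rw [← h]
        _ = c₂ * y * (x₁ * a₁) := by simp only [mul_assoc]
  -- Part (iv) backward
  · rintro ⟨⟨r, hr⟩, ⟨s, hs⟩⟩
    have e1 : y * x₁ = (a₂ * (x₂ * y)) * x₁ := by
      refine cancelL L₁ ?_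
      have key : a₂ * (x₂ * (a₂ * (x₂ * r))) = a₂ * (x₂ * r) := by
        have := congrArg (fun t => a₂ * (t * r)) hx₂
        simpa only [mul_assoc] using this
      calc y * b₁ = a₂ * (x₂ * r) := hr
        _ = a₂ * (x₂ * (a₂ * (x₂ * r))) := key.symm
        _ = a₂ * (x₂ * (y * b₁)) := by rw [hr]
        _ = (a₂ * (x₂ * y)) * b₁ := by simp only [mul_assoc]
    have e2 : x₂ * y = x₂ * (y * (x₁ * a₁)) := by
      refine cancelR R₂ ?_
      have key : x₁ * (a₁ * (x₁ * a₁)) = x₁ * a₁ := by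
        have := congrArg (fun t => t * a₁) hx₁
        simpa only [mul_assoc] using this
      calc c₂ * y = s * (x₁ * a₁) := hs
        _ = s * (x₁ * (a₁ * (x₁ * a₁))) := by rw [key]
        _ = (s * (x₁ * a₁)) * (x₁ * a₁) := by simp only [mul_assoc]
        _ = (c₂ * y) * (x₁ * a₁) := by rw [hs]
        _ = c₂ * (y * (x₁ * a₁)) := by simp only [mul_assoc]
    have e1' := congrArg (fun t => t * a₁) e1
    simp only [mul_assoc] at e1'
    rw [e1', ← e2]
end

section
/- Let S be a semigroup, let a_i, b_i, c_i ∈ S and suppose x_i is a (b_i,c_i)-inverse of a_i for i = 1, 2. Then for any y ∈ S: (i) y·a₁·x₁ = a₂·x₂·y if and only if y·a₁·b₁ ∈ a₂·b₂·S and c₂·y ∈ S·c₁; (ii) y·x₁·a₁ = x₂·a₂·y if and only if y·b₁ ∈ b₂·S and c₂·a₂·y ∈ S·c₁·a₁; (iii) y·a₁·x₁ = x₂·a₂·y if and only if y·a₁·b₁ ∈ b₂·S and c₂·a₂·y ∈ S·c₁; (iv) y·x₁·a₁ = a₂·x₂·y if and only if y·b₁ ∈ a₂·b₂·S and c₂·y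 ∈ S·c₁·a₁. -/
/-- General intertwining lemma. -/
lemma intertwine_aux {S : Type*} [Semigroup S]
    (u₁ β₁ γ₁ σ₁ τ₁ u₂ β₂ γ₂ σ₂ τ₂ y : S)
    (hβ₁ : u₁ * β₁ = β₁) (hγ₁ : γ₁ * u₁ = γ₁) (hσ₁ : u₁ = β₁ * σ₁) (hτ₁ : u₁ = τ₁ * γ₁)
    (hβ₂ : u₂ * β₂ = β₂) (hγ₂ : γ₂ * u₂ = γ₂) (hσ₂ : u₂ = β₂ * σ₂) (hτ₂ : u₂ = τ₂ * γ₂) :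
    y * u₁ = u₂ * y ↔ (∃ s : S, y * β₁ = β₂ * s) ∧ (∃ s : S, γ₂ * y = s * γ₁) := by
  constructor
  · intro h
    constructor
    · refine ⟨σ₂ * (y * β₁), ?_⟩
      calc y * β₁ = y * (u₁ * β₁) := by rw [hβ₁]
        _ = (y * u₁) * β₁ := by simp only [mul_assoc]
        _ = (u₂ * y) * β₁ := by rw [h]
        _ = ((β₂ * σ₂) * y) * β₁ := by rw [← hσ₂]
        _ = β₂ * (σ₂ * (y * β₁)) := by simp only [mul_assoc]
    · refine ⟨γ₂ * (y * τ₁), ?_⟩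
      calc γ₂ * y = (γ₂ * u₂) * y := by rw [hγ₂]
        _ = γ₂ * (u₂ * y) := by simp only [mul_assoc]
        _ = γ₂ * (y * u₁) := by rw [h]
        _ = γ₂ * (y * (τ₁ * γ₁)) := by rw [← hτ₁]
        _ = (γ₂ * (y * τ₁)) * γ₁ := by simp only [mul_assoc]
  · rintro ⟨⟨s, hs⟩, ⟨t, ht⟩⟩
    have k1 : y * u₁ = u₂ * (y * u₁) := by
      calc y * u₁ = y * (β₁ * σ₁) := by rw [← hσ₁]
        _ = (y * β₁) * σ₁ := by simp only [mul_assoc]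
        _ = (β₂ * s) * σ₁ := by rw [hs]
        _ = ((u₂ * β₂) * s) * σ₁ := by rw [hβ₂]
        _ = u₂ * ((β₂ * s) * σ₁) := by simp only [mul_assoc]
        _ = u₂ * ((y * β₁) * σ₁) := by rw [hs]
        _ = u₂ * (y * (β₁ * σ₁)) := by simp only [mul_assoc]
        _ = u₂ * (y * u₁) := by rw [← hσ₁]
    have k2 : u₂ * y = u₂ * (y * u₁) := by
      calc u₂ * y = (τ₂ * γ₂) * y := by rw [← hτ₂]
        _ = τ₂ * (γ₂ * y) := by simp only [mul_assoc]
        _ = τ₂ * (t * γ₁) := by rw [ht]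
        _ = τ₂ * (t * (γ₁ * u₁)) := by rw [hγ₁]
        _ = τ₂ * ((t * γ₁) * u₁) := by simp only [mul_assoc]
        _ = τ₂ * ((γ₂ * y) * u₁) := by rw [ht]
        _ = (τ₂ * γ₂) * (y * u₁) := by simp only [mul_assoc]
        _ = u₂ * (y * u₁) := by rw [← hτ₂]
    rw [k1, ← k2]

theorem intertwining_special_bc {S : Type*} [Semigroup S]
    (a₁ b₁ c₁ x₁ a₂ b₂ c₂ x₂ : S)
    (h₁ : IsBCInv a₁ b₁ c₁ x₁) (h₂ : IsBCInv a₂ b₂ c₂ x₂) (y : S) :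
    (y * a₁ * x₁ = a₂ * x₂ * y ↔
      (∃ s : S, y * a₁ * b₁ = a₂ * b₂ * s) ∧ (∃ s : S, c₂ * y = s * c₁)) ∧
    (y * x₁ * a₁ = x₂ * a₂ * y ↔
      (∃ s : S, y * b₁ = b₂ * s) ∧ (∃ s : S, c₂ * a₂ * y = s * c₁ * a₁)) ∧
    (y * a₁ * x₁ = x₂ * a₂ * y ↔
      (∃ s : S, y * a₁ * b₁ = b₂ * s) ∧ (∃ s : S, c₂ * a₂ * y = s * c₁)) ∧
    (y * x₁ * a₁ = a₂ * x₂ * y ↔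
      (∃ s : S, y * b₁ = a₂ * b₂ * s) ∧ (∃ s : S, c₂ * y = s * c₁ * a₁)) := by
  obtain ⟨e₁, f₁, ⟨s₁, hs₁⟩, ⟨t₁, ht₁⟩⟩ := h₁
  obtain ⟨e₂, f₂, ⟨s₂, hs₂⟩, ⟨t₂, ht₂⟩⟩ := h₂
  -- facts for u = a*x (type A) and u = x*a (type B), index 1
  have A1β : (a₁ * x₁) * (a₁ * b₁) = a₁ * b₁ := by
    rw [mul_assoc a₁ x₁, ← mul_assoc x₁ a₁ b₁, e₁]
  have A1γ : c₁ * (a₁ * x₁) = c₁ := by rw [← mul_assoc]; exact f₁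
  have A1σ : a₁ * x₁ = (a₁ * b₁) * s₁ := by rw [hs₁]; simp only [mul_assoc]
  have A1τ : a₁ * x₁ = (a₁ * t₁) * c₁ := by rw [ht₁]; simp only [mul_assoc]
  have B1β : (x₁ * a₁) * b₁ = b₁ := e₁
  have B1γ : (c₁ * a₁) * (x₁ * a₁) = c₁ * a₁ := by
    simp only [mul_assoc]; simp only [← mul_assoc]; rw [f₁]
  have B1σ : x₁ * a₁ = b₁ * (s₁ * a₁) := by rw [hs₁]; simp only [mul_assoc]
  have B1τ : x₁ * a₁ = t₁ * (c₁ * a₁) := by rw [ht₁]; simp only [mul_assoc]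
  have A2β : (a₂ * x₂) * (a₂ * b₂) = a₂ * b₂ := by
    rw [mul_assoc a₂ x₂, ← mul_assoc x₂ a₂ b₂, e₂]
  have A2γ : c₂ * (a₂ * x₂) = c₂ := by rw [← mul_assoc]; exact f₂
  have A2σ : a₂ * x₂ = (a₂ * b₂) * s₂ := by rw [hs₂]; simp only [mul_assoc]
  have A2τ : a₂ * x₂ = (a₂ * t₂) * c₂ := by rw [ht₂]; simp only [mul_assoc]
  have B2β : (x₂ * a₂) * b₂ = b₂ := e₂
  have B2γ : (c₂ * a₂) * (x₂ * a₂) = c₂ * a₂ := by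
    simp only [mul_assoc]; simp only [← mul_assoc]; rw [f₂]
  have B2σ : x₂ * a₂ = b₂ * (s₂ * a₂) := by rw [hs₂]; simp only [mul_assoc]
  have B2τ : x₂ * a₂ = t₂ * (c₂ * a₂) := by rw [ht₂]; simp only [mul_assoc]
  refine ⟨?_, ?_, ?_, ?_⟩
  · have := intertwine_aux (a₁ * x₁) (a₁ * b₁) c₁ s₁ (a₁ * t₁)
      (a₂ * x₂) (a₂ * b₂) c₂ s₂ (a₂ * t₂) y A1β A1γ A1σ A1τ A2β A2γ A2σ A2τ
    simpa only [mul_assoc] using this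
  · have := intertwine_aux (x₁ * a₁) b₁ (c₁ * a₁) (s₁ * a₁) t₁
      (x₂ * a₂) b₂ (c₂ * a₂) (s₂ * a₂) t₂ y B1β B1γ B1σ B1τ B2β B2γ B2σ B2τ
    simpa only [mul_assoc] using this
  · have := intertwine_aux (a₁ * x₁) (a₁ * b₁) c₁ s₁ (a₁ * t₁)
      (x₂ * a₂) b₂ (c₂ * a₂) (s₂ * a₂) t₂ y A1β A1γ A1σ A1τ B2β B2γ B2σ B2τ
    simpa only [mul_assoc] using this
  · have := intertwine_aux (x₁ * a₁) b₁ (c₁ * a₁) (s₁ * a₁) t₁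
      (a₂ * x₂) (a₂ * b₂) c₂ s₂ (a₂ * t₂) y B1β B1γ B1σ B1τ A2β A2γ A2σ A2τ
    simpa only [mul_assoc] using this
end

section
/- Let S be a semigroup, let a_i, b_i, c_i ∈ S and suppose x_i is a (b_i,c_i)-inverse of a_i for i = 1, 2. Then the following are equivalent: (i) x₁·a₁ = a₂·x₂; (ii) a₂·b₂·S = b₁·S and S·c₁·a₁ = S·c₂; (iii) a₂·b₂ ∈ b₁·S and c₁·a₁ ∈ S·c₂; (iv) b₁ ∈ a₂·b₂·S and c₂ ∈ S·c₁·a₁. -/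
theorem intertwine_equivalences {S : Type*} [Semigroup S]
    (a₁ b₁ c₁ x₁ a₂ b₂ c₂ x₂ : S)
    (h₁ : IsBCInv a₁ b₁ c₁ x₁) (h₂ : IsBCInv a₂ b₂ c₂ x₂) :
    (x₁ * a₁ = a₂ * x₂ ↔
      ((∀ z : S, (∃ s : S, z = a₂ * b₂ * s) ↔ (∃ s : S, z = b₁ * s)) ∧
        (∀ z : S, (∃ s : S, z = s * c₁ * a₁) ↔ (∃ s : S, z = s * c₂)))) ∧
    (x₁ * a₁ = a₂ * x₂ ↔
      ((∃ s : S, a₂ * b₂ = b₁ * s) ∧ (∃ s : S, c₁ * a₁ = s * c₂))) ∧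
    (x₁ * a₁ = a₂ * x₂ ↔
      ((∃ s : S, b₁ = a₂ * b₂ * s) ∧ (∃ s : S, c₂ = s * c₁ * a₁))) := by
  obtain ⟨e1, e2, ⟨p, hp⟩, ⟨w, hw⟩⟩ := h₁
  obtain ⟨f1, f2, ⟨u, hu⟩, ⟨v, hv⟩⟩ := h₂
  -- basic consequences
  have hC : a₂ * x₂ * (a₂ * b₂) = a₂ * b₂ := by
    rw [mul_assoc, ← mul_assoc x₂, f1]
  have hB : c₁ * a₁ * (x₁ * a₁) = c₁ * a₁ := by
    rw [← mul_assoc, e2]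
  have hD : c₂ * (a₂ * x₂) = c₂ := by rw [← mul_assoc, f2]
  -- (i) → (iii)
  have h13 : x₁ * a₁ = a₂ * x₂ →
      (∃ s : S, a₂ * b₂ = b₁ * s) ∧ (∃ s : S, c₁ * a₁ = s * c₂) := by
    intro h
    constructor
    · refine ⟨p * (a₁ * (a₂ * b₂)), ?_⟩
      calc a₂ * b₂ = x₁ * a₁ * (a₂ * b₂) := by rw [h, hC]
        _ = b₁ * (p * (a₁ * (a₂ * b₂))) := by rw [hp]; simp only [mul_assoc]
    · refine ⟨c₁ * a₁ * (a₂ * v), ?_⟩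
      calc c₁ * a₁ = c₁ * a₁ * (x₁ * a₁) := hB.symm
        _ = c₁ * a₁ * (a₂ * (v * c₂)) := by rw [h, hv]
        _ = c₁ * a₁ * (a₂ * v) * c₂ := by simp only [mul_assoc]
  -- (iii) → (i)
  have h31 : ((∃ s : S, a₂ * b₂ = b₁ * s) ∧ (∃ s : S, c₁ * a₁ = s * c₂)) →
      x₁ * a₁ = a₂ * x₂ := by
    rintro ⟨⟨s, hs⟩, ⟨t, ht⟩⟩
    have step1 : x₁ * a₁ * (a₂ * b₂) = a₂ * b₂ := by
      rw [hs, ← mul_assoc, e1]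
    have step2 : x₁ * a₁ * (a₂ * x₂) = a₂ * x₂ := by
      rw [hu]
      calc x₁ * a₁ * (a₂ * (b₂ * u)) = x₁ * a₁ * (a₂ * b₂) * u := by
            simp only [mul_assoc]
        _ = a₂ * b₂ * u := by rw [step1]
        _ = a₂ * (b₂ * u) := by simp only [mul_assoc]
    have step3 : c₁ * a₁ * (a₂ * x₂) = c₁ * a₁ := by
      rw [ht, mul_assoc, hD]
    calc x₁ * a₁ = w * (c₁ * a₁) := by rw [hw]; simp only [mul_assoc]
      _ = w * (c₁ * a₁ * (a₂ * x₂)) := by rw [step3]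
      _ = w * (c₁ * a₁) * (a₂ * x₂) := by simp only [mul_assoc]
      _ = x₁ * a₁ * (a₂ * x₂) := by rw [hw]; simp only [mul_assoc]
      _ = a₂ * x₂ := step2
  -- (i) → (iv)
  have h14 : x₁ * a₁ = a₂ * x₂ →
      (∃ s : S, b₁ = a₂ * b₂ * s) ∧ (∃ s : S, c₂ = s * c₁ * a₁) := by
    intro h
    constructor
    · refine ⟨u * b₁, ?_⟩
      calc b₁ = x₁ * a₁ * b₁ := e1.symm
        _ = a₂ * (b₂ * u) * b₁ := by rw [h, hu]
        _ = a₂ * b₂ * (u * b₁) := by simp only [mul_assoc]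
    · refine ⟨c₂ * w, ?_⟩
      calc c₂ = c₂ * (a₂ * x₂) := hD.symm
        _ = c₂ * (w * c₁ * a₁) := by rw [← h, hw]
        _ = c₂ * w * c₁ * a₁ := by simp only [mul_assoc]
  -- (iv) → (i)
  have h41 : ((∃ s : S, b₁ = a₂ * b₂ * s) ∧ (∃ s : S, c₂ = s * c₁ * a₁)) →
      x₁ * a₁ = a₂ * x₂ := by
    rintro ⟨⟨s, hs⟩, ⟨t, ht⟩⟩
    have step1 : a₂ * x₂ * b₁ = b₁ := by
      rw [hs]
      calc a₂ * x₂ * (a₂ * b₂ * s) = a₂ * x₂ * (a₂ * b₂) * s := by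
            simp only [mul_assoc]
        _ = a₂ * b₂ * s := by rw [hC]
    have step2 : a₂ * x₂ * (x₁ * a₁) = x₁ * a₁ := by
      rw [hp]
      calc a₂ * x₂ * (b₁ * p * a₁) = a₂ * x₂ * b₁ * (p * a₁) := by
            simp only [mul_assoc]
        _ = b₁ * (p * a₁) := by rw [step1]
        _ = b₁ * p * a₁ := by simp only [mul_assoc]
    have step3 : c₂ * (x₁ * a₁) = c₂ := by
      calc c₂ * (x₁ * a₁) = t * (c₁ * a₁ * (x₁ * a₁)) := by
            rw [ht]; simp only [mul_assoc]
        _ = t * (c₁ * a₁) := by rw [hB]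
        _ = c₂ := by rw [ht, mul_assoc]
    calc x₁ * a₁ = a₂ * x₂ * (x₁ * a₁) := step2.symm
      _ = a₂ * v * (c₂ * (x₁ * a₁)) := by rw [hv]; simp only [mul_assoc]
      _ = a₂ * v * c₂ := by rw [step3]
      _ = a₂ * x₂ := by rw [hv, mul_assoc]
  -- (ii) → (iii)
  have h23 : ((∀ z : S, (∃ s : S, z = a₂ * b₂ * s) ↔ (∃ s : S, z = b₁ * s)) ∧
      (∀ z : S, (∃ s : S, z = s * c₁ * a₁) ↔ (∃ s : S, z = s * c₂))) →
      (∃ s : S, a₂ * b₂ = b₁ * s) ∧ (∃ s : S, c₁ * a₁ = s * c₂) := by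
    rintro ⟨hbS, hcS⟩
    constructor
    · refine (hbS (a₂ * b₂)).mp ⟨u * (a₂ * b₂), ?_⟩
      calc a₂ * b₂ = a₂ * (b₂ * u) * (a₂ * b₂) := by rw [← hu, hC]
        _ = a₂ * b₂ * (u * (a₂ * b₂)) := by simp only [mul_assoc]
    · refine (hcS (c₁ * a₁)).mp ⟨c₁ * a₁ * w, ?_⟩
      calc c₁ * a₁ = c₁ * a₁ * (w * c₁ * a₁) := by rw [← hw, hB]
        _ = c₁ * a₁ * w * c₁ * a₁ := by simp only [mul_assoc]
  -- (i) → (ii)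
  have h12 : x₁ * a₁ = a₂ * x₂ →
      ((∀ z : S, (∃ s : S, z = a₂ * b₂ * s) ↔ (∃ s : S, z = b₁ * s)) ∧
      (∀ z : S, (∃ s : S, z = s * c₁ * a₁) ↔ (∃ s : S, z = s * c₂))) := by
    intro h
    obtain ⟨⟨s₁, hs₁⟩, ⟨t₁, ht₁⟩⟩ := h13 h
    obtain ⟨⟨s₂, hs₂⟩, ⟨t₂, ht₂⟩⟩ := h14 h
    constructor
    · intro z
      constructor
      · rintro ⟨s, rfl⟩
        exact ⟨s₁ * s, by rw [hs₁, mul_assoc]⟩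
      · rintro ⟨s, rfl⟩
        exact ⟨s₂ * s, by rw [hs₂]; simp only [mul_assoc]⟩
    · intro z
      constructor
      · rintro ⟨s, rfl⟩
        exact ⟨s * t₁, by rw [mul_assoc s c₁, ht₁]; simp only [mul_assoc]⟩
      · rintro ⟨s, rfl⟩
        exact ⟨s * t₂, by rw [ht₂]; simp only [mul_assoc]⟩
  refine ⟨⟨h12, fun h => h31 (h23 h)⟩, ⟨h13, h31⟩, ⟨h14, h41⟩⟩
end

section
/- Let R be a (not necessarily unital) associative ring, let a_i, b_i, c_i ∈ R and suppose x_i is an annihilator (b_i,c_i)-inverse of a_i for i = 1, 2. If b₁ = b₂, then x₁·a₁·x₂ = x₂ and x₂·a₂·x₁ = x₁. Dually, if c₁ = c₂, then x₁·a₂·x₂ = x₁ and x₂·a₁·x₁ = x₂. -/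
theorem absorption_lemma {R : Type*} [NonUnitalRing R]
    (a₁ b₁ c₁ x₁ a₂ b₂ c₂ x₂ : R)
    (h₁ : IsAnnBCInv a₁ b₁ c₁ x₁) (h₂ : IsAnnBCInv a₂ b₂ c₂ x₂) :
    (b₁ = b₂ → x₁ * a₁ * x₂ = x₂ ∧ x₂ * a₂ * x₁ = x₁) ∧
      (c₁ = c₂ → x₁ * a₂ * x₂ = x₁ ∧ x₂ * a₁ * x₁ = x₂) := by
  obtain ⟨hx₁, hb₁, hc₁, hl₁, hr₁⟩ := h₁
  obtain ⟨hx₂, hb₂, hc₂, hl₂, hr₂⟩ := h₂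
  constructor
  · intro hb; subst hb
    constructor
    · have h : (x₁ * a₁ - x₂ * a₂) * b₁ = 0 := by
        rw [sub_mul, hb₁, hb₂, sub_self]
      have := hl₂ _ h
      rw [sub_mul] at this
      rw [sub_eq_zero] at this; rw [this, hx₂]
    · have h : (x₂ * a₂ - x₁ * a₁) * b₁ = 0 := by
        rw [sub_mul, hb₁, hb₂, sub_self]
      have := hl₁ _ h
      rw [sub_mul] at this
      rw [sub_eq_zero] at this; rw [this, hx₁]
  · intro hc; subst hc
    constructor
    · have h : c₁ * (a₂ * x₂ - a₁ * x₁) = 0 := by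
        rw [mul_sub, ← mul_assoc, ← mul_assoc, hc₁, hc₂, sub_self]
      have := hr₁ _ h
      rw [mul_sub, ← mul_assoc, ← mul_assoc] at this
      rw [sub_eq_zero] at this; rw [this, hx₁]
    · have h : c₁ * (a₁ * x₁ - a₂ * x₂) = 0 := by
        rw [mul_sub, ← mul_assoc, ← mul_assoc, hc₁, hc₂, sub_self]
      have := hr₂ _ h
      rw [mul_sub, ← mul_assoc, ← mul_assoc] at this
      rw [sub_eq_zero] at this; rw [this, hx₂]
end

section
/- Let R be a (not necessarily unital) associative ring, let a₁, a₂, b, c ∈ R and suppose x₁ is an annihilator (b,c)-inverse of a₁ and x₂ is an annihilator (b,c)-inverse of a₂. Then the absorption law holds: x₁ + x₂ = x₁·(a₁ + a₂)·x₂ = x₂·(a₁ + a₂)·x₁. -/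
lemma ann_key1 {R : Type*} [NonUnitalRing R] (a₁ a₂ b c x₁ x₂ : R)
    (h₁ : IsAnnBCInv a₁ b c x₁) (h₂ : IsAnnBCInv a₂ b c x₂) :
    x₁ * a₁ * x₂ = x₂ := by
  obtain ⟨e₁, hb₁, hc₁, la₁, ra₁⟩ := h₁
  obtain ⟨e₂, hb₂, hc₂, la₂, ra₂⟩ := h₂
  have h : (x₁ * a₁ - x₂ * a₂) * b = 0 := by
    rw [sub_mul, mul_assoc, ← mul_assoc, hb₁, mul_assoc, ← mul_assoc, hb₂, sub_self]
  have := la₂ _ h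
  rw [sub_mul] at this
  have h2 : x₂ * a₂ * x₂ = x₂ := e₂
  rw [h2, sub_eq_zero] at this; exact this

lemma ann_key2 {R : Type*} [NonUnitalRing R] (a₁ a₂ b c x₁ x₂ : R)
    (h₁ : IsAnnBCInv a₁ b c x₁) (h₂ : IsAnnBCInv a₂ b c x₂) :
    x₁ * a₂ * x₂ = x₁ := by
  obtain ⟨e₁, hb₁, hc₁, la₁, ra₁⟩ := h₁
  obtain ⟨e₂, hb₂, hc₂, la₂, ra₂⟩ := h₂
  have h : c * (a₂ * x₂ - a₁ * x₁) = 0 := by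
    rw [mul_sub, ← mul_assoc, hc₂, ← mul_assoc, hc₁, sub_self]
  have := ra₁ _ h
  rw [mul_sub, ← mul_assoc, ← mul_assoc] at this
  rw [e₁, sub_eq_zero] at this; exact this

theorem absorption_law {R : Type*} [NonUnitalRing R] (a₁ a₂ b c x₁ x₂ : R)
    (h₁ : IsAnnBCInv a₁ b c x₁) (h₂ : IsAnnBCInv a₂ b c x₂) :
    x₁ + x₂ = x₁ * (a₁ + a₂) * x₂ ∧ x₁ + x₂ = x₂ * (a₁ + a₂) * x₁ := by
  have k1 := ann_key1 a₁ a₂ b c x₁ x₂ h₁ h₂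
  have k2 := ann_key2 a₁ a₂ b c x₁ x₂ h₁ h₂
  have k3 := ann_key1 a₂ a₁ b c x₂ x₁ h₂ h₁
  have k4 := ann_key2 a₂ a₁ b c x₂ x₁ h₂ h₁
  constructor
  · rw [mul_add, add_mul, k1, k2, add_comm]
  · rw [mul_add, add_mul, k3, k4, add_comm]
end

section
/- Let R be a (not necessarily unital) associative ring, let a_i, b_i, c_i ∈ R and suppose x_i is an annihilator (b_i,c_i)-inverse of a_i for i = 1, 2. Then x₂·x₁ is an annihilator (b₂,c₁)-inverse of a₁·a₂ if and only if x₂·x₁·a₁·a₂·b₂ = b₂ and c₁·a₁·a₂·x₂·x₁ = c₁. -/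
theorem reverse_order_law_iff {R : Type*} [NonUnitalRing R]
    (a₁ b₁ c₁ x₁ a₂ b₂ c₂ x₂ : R)
    (h₁ : IsAnnBCInv a₁ b₁ c₁ x₁) (h₂ : IsAnnBCInv a₂ b₂ c₂ x₂) :
    IsAnnBCInv (a₁ * a₂) b₂ c₁ (x₂ * x₁) ↔
      x₂ * x₁ * (a₁ * a₂) * b₂ = b₂ ∧ c₁ * (a₁ * a₂) * (x₂ * x₁) = c₁ := by
  obtain ⟨hx1, hb1, hc1, hlb1, hrc1⟩ := h₁
  obtain ⟨hx2, hb2, hc2, hlb2, hrc2⟩ := h₂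
  constructor
  · rintro ⟨-, hb, hc, -, -⟩
    exact ⟨hb, hc⟩
  · rintro ⟨hb, hc⟩
    refine ⟨?_, hb, hc, ?_, ?_⟩
    · have k : (x₂ * x₁ * (a₁ * a₂) - x₂ * a₂) * b₂ = 0 := by
        rw [sub_mul, hb, hb2, sub_self]
      have k2 := hlb2 _ k
      rw [sub_mul, sub_eq_zero, hx2] at k2
      calc x₂ * x₁ * (a₁ * a₂) * (x₂ * x₁)
          = x₂ * x₁ * (a₁ * a₂) * x₂ * x₁ := by simp only [mul_assoc]
        _ = x₂ * x₁ := by rw [k2]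
    · intro r hr
      have := hlb2 r hr
      rw [← mul_assoc] at *
      rw [this, zero_mul]
    · intro r hr
      have := hrc1 r hr
      rw [mul_assoc, this, mul_zero]
end

section
/- Let R be a (not necessarily unital) associative ring, let a_i, b_i, c_i ∈ R and suppose x_i is an annihilator (b_i,c_i)-inverse of a_i for i = 1, 2. If one of the following holds: (i) x₁·a₁ = a₁·x₁ and c₁ = c₂; (ii) x₂·a₂ = a₂·x₂ and b₁ = b₂; (iii) x₁·a₁ = a₂·x₂; then x₂·x₁ is an annihilator (b₂,c₁)-inverse of a₁·a₂ (the reverse order law). -/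
theorem reverse_order_law_sufficient {R : Type*} [NonUnitalRing R]
    (a₁ b₁ c₁ x₁ a₂ b₂ c₂ x₂ : R)
    (h₁ : IsAnnBCInv a₁ b₁ c₁ x₁) (h₂ : IsAnnBCInv a₂ b₂ c₂ x₂)
    (h : (x₁ * a₁ = a₁ * x₁ ∧ c₁ = c₂) ∨ (x₂ * a₂ = a₂ * x₂ ∧ b₁ = b₂) ∨
      x₁ * a₁ = a₂ * x₂) :
    IsAnnBCInv (a₁ * a₂) b₂ c₁ (x₂ * x₁) := by
  obtain ⟨p₁, q₁, r₁, A₁, B₁⟩ := h₁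
  obtain ⟨p₂, q₂, r₂, A₂, B₂⟩ := h₂
  -- re-associated versions of the hypotheses
  have p₂t : ∀ t : R, x₂ * (a₂ * (x₂ * t)) = x₂ * t := fun t => by
    rw [← mul_assoc, ← mul_assoc, p₂]
  have r₁t : ∀ t : R, c₁ * (a₁ * (x₁ * t)) = c₁ * t := fun t => by
    rw [← mul_assoc, ← mul_assoc, r₁]
  have q₂t : x₂ * (a₂ * b₂) = b₂ := by rw [← mul_assoc, q₂]
  have main : x₂ * x₁ * (a₁ * a₂) * (x₂ * x₁) = x₂ * x₁ ∧
      x₂ * x₁ * (a₁ * a₂) * b₂ = b₂ ∧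
      c₁ * (a₁ * a₂) * (x₂ * x₁) = c₁ := by
    rcases h with ⟨hx, hc⟩ | ⟨hx, hb⟩ | hx
    · -- case (i): x₁a₁ = a₁x₁ and c₁ = c₂
      have hxt : ∀ t : R, x₁ * (a₁ * t) = a₁ * (x₁ * t) := fun t => by
        rw [← mul_assoc, hx, mul_assoc]
      have B₂' : ∀ r : R, c₁ * r = 0 → x₂ * r = 0 := fun r hr => B₂ r (hc ▸ hr)
      have star' : ∀ u : R, x₂ * (a₁ * (x₁ * u)) = x₂ * u := fun u => by
        have h0 : c₁ * (a₁ * (x₁ * u) - u) = 0 := by rw [mul_sub, r₁t, sub_self]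
        have h1 := B₂' _ h0
        rw [mul_sub, sub_eq_zero] at h1
        exact h1
      have hc2t : ∀ t : R, c₁ * (a₂ * (x₂ * t)) = c₁ * t := fun t => by
        rw [← mul_assoc, ← mul_assoc, hc, r₂]
      have L1 : ∀ s : R, x₁ * (a₂ * (x₂ * s)) = x₁ * s := fun s => by
        have h0 : c₁ * (a₂ * (x₂ * s) - s) = 0 := by rw [mul_sub, hc2t, sub_self]
        have h1 := B₁ _ h0
        rw [mul_sub, sub_eq_zero] at h1
        exact h1
      refine ⟨?_, ?_, ?_⟩
      · simp only [mul_assoc]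
        rw [hxt, star', p₂t]
      · simp only [mul_assoc]
        rw [hxt, star', q₂t]
      · simp only [mul_assoc]
        conv_lhs => rw [← r₁t]
        rw [hxt, L1, ← hxt, r₁t, ← mul_assoc, r₁]
    · -- case (ii): x₂a₂ = a₂x₂ and b₁ = b₂
      have hxt : ∀ t : R, x₂ * (a₂ * t) = a₂ * (x₂ * t) := fun t => by
        rw [← mul_assoc, hx, mul_assoc]
      have A₁' : ∀ r : R, r * b₂ = 0 → r * x₁ = 0 := fun r hr => A₁ r (hb.symm ▸ hr)
      have qb : x₁ * (a₁ * b₂) = b₂ := by rw [← hb, ← mul_assoc, q₁]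
      have star2 : x₁ * (a₁ * (x₂ * (a₂ * x₁))) = x₁ := by
        have h0 : (x₁ * (a₁ * (x₂ * a₂)) - x₁ * a₁) * b₂ = 0 := by
          have e1 : x₁ * (a₁ * (x₂ * a₂)) * b₂ = b₂ := by
            simp only [mul_assoc]
            rw [q₂t, qb]
          have e2 : x₁ * a₁ * b₂ = b₂ := by rw [mul_assoc]; exact qb
          rw [sub_mul, e1, e2, sub_self]
        have h1 := A₁' _ h0
        rw [sub_mul, sub_eq_zero] at h1
        have e3 : x₁ * (a₁ * (x₂ * a₂)) * x₁ = x₁ * (a₁ * (x₂ * (a₂ * x₁))) := by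
          simp only [mul_assoc]
        rw [← e3, h1, p₁]
      have h0 : (x₂ * (x₁ * a₁) - x₂) * b₂ = 0 := by
        rw [sub_mul, sub_eq_zero, mul_assoc, mul_assoc, qb]
      have h1 := A₂ _ h0
      rw [sub_mul, sub_eq_zero] at h1
      have Lt : ∀ t : R, x₂ * (x₁ * (a₁ * (x₂ * t))) = x₂ * (x₂ * t) := fun t => by
        simpa only [mul_assoc] using congrArg (· * t) h1
      refine ⟨?_, ?_, ?_⟩
      · simp only [mul_assoc]
        rw [← hxt, star2]
      · simp only [mul_assoc]
        conv_lhs => rw [← q₂t]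
        rw [← hxt, Lt, hxt, q₂t, q₂t]
      · simp only [mul_assoc]
        rw [← hxt]
        conv_lhs => rw [← r₁t]
        rw [star2, ← mul_assoc, r₁]
    · -- case (iii): x₁a₁ = a₂x₂
      have hxt : ∀ t : R, x₁ * (a₁ * t) = a₂ * (x₂ * t) := fun t => by
        rw [← mul_assoc, hx, mul_assoc]
      refine ⟨?_, ?_, ?_⟩
      · simp only [mul_assoc]
        rw [hxt, p₂t, p₂t]
      · simp only [mul_assoc]
        rw [hxt, p₂t, q₂t]
      · simp only [mul_assoc]
        rw [← hxt, r₁t, ← mul_assoc, r₁]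
    -- end cases
  exact ⟨main.1, main.2.1, main.2.2,
    fun r hr => by rw [← mul_assoc, A₂ r hr, zero_mul],
    fun r hr => by rw [mul_assoc, B₁ r hr, mul_zero]⟩
end

section
/- Let R be a (not necessarily unital) associative ring, let a₁, a₂, b, c ∈ R and let n be a positive integer. If x is an annihilator (b,c)-inverse of (a₁·a₂)^{n+1}, then a₂·x·a₁ is an annihilator (a₂·b, c·a₁)-inverse of (a₂·a₁)^n. -/
lemma pw_shift {R : Type*} [NonUnitalRing R] (a b : R) (n : ℕ) :
    a * pw (b * a) n = pw (a * b) n * a := by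
  induction n with
  | zero => simp [pw, mul_assoc]
  | succ n ih =>
      simp only [pw, ← mul_assoc, ih]

lemma pw_key {R : Type*} [NonUnitalRing R] (a b : R) (n : ℕ) :
    a * pw (b * a) n * b = pw (a * b) (n + 1) := by
  rw [pw_shift, pw, mul_assoc]

/-- Cline's formula for annihilator `(b,c)`-inverses. For a positive integer `n`,
written here as `n = k + 1` with `k : ℕ`, note `pw (a₁*a₂) (k+1) = (a₁*a₂)^(n+1)`
and `pw (a₂*a₁) k = (a₂*a₁)^n`. -/
theorem cline_formula_ann {R : Type*} [NonUnitalRing R] (a₁ a₂ b c x : R) (k : ℕ)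
    (hx : IsAnnBCInv (pw (a₁ * a₂) (k + 1)) b c x) :
    IsAnnBCInv (pw (a₂ * a₁) k) (a₂ * b) (c * a₁) (a₂ * x * a₁) := by
  obtain ⟨h1, h2, h3, h4, h5⟩ := hx
  have key : a₁ * pw (a₂ * a₁) k * a₂ = pw (a₁ * a₂) (k + 1) := pw_key a₁ a₂ k
  refine ⟨?_, ?_, ?_, ?_, ?_⟩
  · calc a₂ * x * a₁ * pw (a₂ * a₁) k * (a₂ * x * a₁)
        = a₂ * (x * (a₁ * pw (a₂ * a₁) k * a₂) * x) * a₁ := by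
          simp only [mul_assoc]
      _ = a₂ * x * a₁ := by rw [key]; simp only [← mul_assoc, h1]
  · calc a₂ * x * a₁ * pw (a₂ * a₁) k * (a₂ * b)
        = a₂ * (x * (a₁ * pw (a₂ * a₁) k * a₂) * b) := by simp only [mul_assoc]
      _ = a₂ * b := by rw [key]; simp only [← mul_assoc, h2]
  · calc c * a₁ * pw (a₂ * a₁) k * (a₂ * x * a₁)
        = c * (a₁ * pw (a₂ * a₁) k * a₂) * x * a₁ := by simp only [mul_assoc]
      _ = c * a₁ := by rw [key, h3]
  · intro r hr
    have : r * a₂ * x = 0 := h4 (r * a₂) (by rw [mul_assoc]; exact hr)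
    calc r * (a₂ * x * a₁) = r * a₂ * x * a₁ := by simp only [mul_assoc]
      _ = 0 := by rw [this, zero_mul]
  · intro r hr
    have : x * (a₁ * r) = 0 := h5 (a₁ * r) (by rw [← mul_assoc]; exact hr)
    calc a₂ * x * a₁ * r = a₂ * (x * (a₁ * r)) := by simp only [mul_assoc]
      _ = 0 := by rw [this, mul_zero]
end
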